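/- The budget allocation procedure that sorts cluster sizes s_1 ≤ s_2 ≤ ... ≤ s_m in ascending order and iteratively assigns to each remaining cluster a_i = min(s_i, ⌊B/r⌋) where B is the remaining budget and r the number of remaining clusters, followed by distributing any leftover budget one unit at a time to clusters with a_i < s_i, produces an allocation satisfying: (1) 0 ≤ a_i ≤ s_i for all i, and (2) Σ a_i = min(k, Σ s_i), where k is the total budget. -/

import Mathlib

/-- Phase 1 of the budget-allocation procedure: process clusters (sorted ascending by
size) in order, assigning to each the minimum of its size and the integer average
`⌊B/r⌋` of the remaining budget `B` over the `r` remaining clusters. -/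
def allocPhase1 : List ℕ → ℕ → List ℕ
  | [], _ => []
  | s :: rest, B =>
    let q := B / (rest.length + 1)
    let a := min s q
    a :: allocPhase1 rest (B - a)

/-- One pass of the leftover-distribution loop: walk along the clusters, giving one
extra unit of budget to each cluster whose allocation is below its size, stopping
when the budget is exhausted.  Pairs are `(allocation, size)`. -/
def allocPass : ℕ → List (ℕ × ℕ) → ℕ × List (ℕ × ℕ)
  | B, [] => (B, [])
  | 0, l => (0, l)
  | B + 1, (a, s) :: t =>
    if a < s then
      let r := allocPass B t
      (r.1, (a + 1, s) :: r.2)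
    else
      let r := allocPass (B + 1) t
      (r.1, (a, s) :: r.2)

/-- Repeat passes until the budget is exhausted or no cluster has remaining capacity
(fuel-bounded; fuel equal to the budget suffices). -/
def allocLoop : ℕ → ℕ → List (ℕ × ℕ) → List (ℕ × ℕ)
  | 0, _, l => l
  | fuel + 1, B, l =>
    if B = 0 then l
    else
      let r := allocPass B l
      if r.1 = B then r.2 else allocLoop fuel r.1 r.2

lemma allocPass_le (B : ℕ) (l : List (ℕ × ℕ)) : (allocPass B l).1 ≤ B := by
  induction l generalizing B with
  | nil => simp [allocPass]
  | cons p t ih =>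
    obtain ⟨a, s⟩ := p
    cases B with
    | zero => simp [allocPass]
    | succ B =>
      simp only [allocPass]
      split
      · exact le_trans (ih B) (Nat.le_succ B)
      · exact ih (B+1)

lemma allocPass_sum (B : ℕ) (l : List (ℕ × ℕ)) :
    (allocPass B l).1 + ((allocPass B l).2.map Prod.fst).sum
      = B + (l.map Prod.fst).sum := by
  induction l generalizing B with
  | nil => simp [allocPass]
  | cons p t ih =>
    obtain ⟨a, s⟩ := p
    cases B with
    | zero => simp [allocPass]
    | succ B =>
      simp only [allocPass]
      split
      · have := ih B
        simp only [List.map_cons, List.sum_cons]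
        omega
      · have := ih (B+1)
        simp only [List.map_cons, List.sum_cons]
        omega

lemma allocPass_snd (B : ℕ) (l : List (ℕ × ℕ)) :
    (allocPass B l).2.map Prod.snd = l.map Prod.snd := by
  induction l generalizing B with
  | nil => simp [allocPass]
  | cons p t ih =>
    obtain ⟨a, s⟩ := p
    cases B with
    | zero => simp [allocPass]
    | succ B =>
      simp only [allocPass]
      split <;> simp [ih]

lemma allocPass_bound (B : ℕ) (l : List (ℕ × ℕ)) (h : ∀ p ∈ l, p.1 ≤ p.2) :
    ∀ p ∈ (allocPass B l).2, p.1 ≤ p.2 := by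
  induction l generalizing B with
  | nil => simp [allocPass]
  | cons p t ih =>
    obtain ⟨a, s⟩ := p
    cases B with
    | zero => simpa [allocPass] using h
    | succ B =>
      have ht : ∀ p ∈ t, p.1 ≤ p.2 := fun p hp => h p (List.mem_cons_of_mem _ hp)
      simp only [allocPass]
      split
      · rename_i has
        intro q hq
        rcases List.mem_cons.1 hq with rfl | hq
        · exact has
        · exact ih B ht q hq
      · intro q hq
        rcases List.mem_cons.1 hq with rfl | hq
        · exact h _ List.mem_cons_self
        · exact ih (B+1) ht q hq

lemma allocPass_full (B : ℕ) (l : List (ℕ × ℕ)) (hB : B ≠ 0)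
    (h : (allocPass B l).1 = B) : ∀ p ∈ (allocPass B l).2, p.2 ≤ p.1 := by
  induction l generalizing B with
  | nil => simp [allocPass]
  | cons p t ih =>
    obtain ⟨a, s⟩ := p
    cases B with
    | zero => omega
    | succ B =>
      by_cases has : a < s
      · exfalso
        simp only [allocPass, if_pos has] at h
        have := allocPass_le B t; omega
      · simp only [allocPass, if_neg has] at h ⊢
        intro q hq
        rcases List.mem_cons.1 hq with rfl | hq
        · omega
        · exact ih (B+1) (Nat.succ_ne_zero B) h q hq

lemma allocLoop_spec (fuel : ℕ) : ∀ B l, B ≤ fuel → (∀ p ∈ l, p.1 ≤ p.2) →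
    (∀ p ∈ allocLoop fuel B l, p.1 ≤ p.2) ∧
    (allocLoop fuel B l).map Prod.snd = l.map Prod.snd ∧
    ∃ B', B' + ((allocLoop fuel B l).map Prod.fst).sum = B + (l.map Prod.fst).sum ∧
      (B' = 0 ∨ ∀ p ∈ allocLoop fuel B l, p.2 ≤ p.1) := by
  induction fuel with
  | zero =>
    intro B l hB hb
    simp only [allocLoop]
    refine ⟨hb, by trivial, 0, ?_, Or.inl rfl⟩
    omega
  | succ fuel ih =>
    intro B l hB hb
    simp only [allocLoop]
    by_cases hB0 : B = 0
    · simp only [if_pos hB0]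
      refine ⟨hb, by trivial, B, ?_, Or.inl hB0⟩
      omega
    · simp only [if_neg hB0]
      by_cases hr : (allocPass B l).1 = B
      · simp only [if_pos hr]
        refine ⟨allocPass_bound B l hb, allocPass_snd B l, B, ?_, Or.inr ?_⟩
        · have := allocPass_sum B l; omega
        · exact allocPass_full B l hB0 hr
      · simp only [if_neg hr]
        have hle := allocPass_le B l
        have h1 : (allocPass B l).1 ≤ fuel := by omega
        obtain ⟨hb', hsnd', B', hsum', hfin'⟩ :=
          ih (allocPass B l).1 (allocPass B l).2 h1 (allocPass_bound B l hb)
        refine ⟨hb', hsnd'.trans (allocPass_snd B l), B', ?_, hfin'⟩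
        have := allocPass_sum B l
        omega

lemma allocPhase1_forall₂ (s : List ℕ) (B : ℕ) :
    List.Forall₂ (· ≤ ·) (allocPhase1 s B) s := by
  induction s generalizing B with
  | nil => simp [allocPhase1]
  | cons x t ih =>
    simp only [allocPhase1]
    exact List.Forall₂.cons (min_le_left _ _) (ih _)

lemma allocPhase1_sum_le (s : List ℕ) (B : ℕ) : (allocPhase1 s B).sum ≤ B := by
  induction s generalizing B with
  | nil => simp [allocPhase1]
  | cons x t ih =>
    simp only [allocPhase1, List.sum_cons]
    have h1 : min x (B / (t.length + 1)) ≤ B :=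
      le_trans (min_le_right _ _) (Nat.div_le_self _ _)
    have := ih (B - min x (B / (t.length + 1)))
    omega

/-- The full budget-allocation procedure on a sorted size list with total budget `k`. -/
def alloc (s : List ℕ) (k : ℕ) : List ℕ :=
  let a1 := allocPhase1 s k
  let B := k - a1.sum
  (allocLoop B B (a1.zip s)).map Prod.fst

/-- The budget-allocation procedure produces an allocation list of the same length as
the size list satisfying `0 ≤ aᵢ ≤ sᵢ` and `Σ aᵢ = min(k, Σ sᵢ)`. -/
theorem alloc_valid (s : List ℕ) (k : ℕ)
    (hsorted : s.Pairwise (· ≤ ·)) (hpos : ∀ x ∈ s, 0 < x) :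
    (alloc s k).length = s.length ∧
    (∀ (i : ℕ) (hi : i < (alloc s k).length) (hi' : i < s.length),
      (alloc s k).get ⟨i, hi⟩ ≤ s.get ⟨i, hi'⟩) ∧
    (alloc s k).sum = min k s.sum := by
  set a1 := allocPhase1 s k with ha1
  have hf2 := allocPhase1_forall₂ s k
  have hlen : a1.length = s.length := hf2.length_eq
  have hAle : a1.sum ≤ k := allocPhase1_sum_le s k
  set B := k - a1.sum with hBdef
  have hzb : ∀ p ∈ a1.zip s, p.1 ≤ p.2 := by
    rintro ⟨a, b⟩ hp
    exact (List.forall₂_iff_zip.1 hf2).2 hp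
  obtain ⟨hb, hsnd, B', hsum, hfin⟩ := allocLoop_spec B B (a1.zip s) le_rfl hzb
  set l' := allocLoop B B (a1.zip s) with hl'
  have hsnd' : l'.map Prod.snd = s := by
    rw [hsnd]
    exact List.map_snd_zip (le_of_eq hlen.symm)
  have hfst' : (a1.zip s).map Prod.fst = a1 :=
    List.map_fst_zip (le_of_eq hlen)
  have halloc : alloc s k = l'.map Prod.fst := rfl
  have hlen' : (alloc s k).length = s.length := by
    rw [halloc, ← hsnd', List.length_map, List.length_map]
  have hsum' : B' + (alloc s k).sum = k := by
    rw [halloc]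
    rw [hfst'] at hsum
    omega
  have hle_sum : (alloc s k).sum ≤ s.sum := by
    rw [halloc, ← hsnd']
    exact List.sum_le_sum hb
  refine ⟨hlen', ?_, ?_⟩
  · intro i hi hi'
    simp only [List.get_eq_getElem]
    have hi2 : i < l'.length := by
      rw [halloc, List.length_map] at hi; exact hi
    have e1 : (alloc s k)[i]'hi = (l'[i]'hi2).1 := by
      rw [List.getElem_of_eq halloc hi, List.getElem_map]
    have e2 : s[i]'hi' = (l'[i]'hi2).2 := by
      rw [List.getElem_of_eq hsnd'.symm hi', List.getElem_map]
    rw [e1, e2]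
    exact hb _ (List.getElem_mem hi2)
  · rcases hfin with h0 | hfull
    · have hk : (alloc s k).sum = k := by omega
      rw [hk]
      exact (min_eq_left (hk ▸ hle_sum)).symm
    · have heq : l'.map Prod.fst = l'.map Prod.snd := by
        apply List.map_congr_left
        intro p hp
        exact le_antisymm (hb p hp) (hfull p hp)
      have : (alloc s k).sum = s.sum := by rw [halloc, heq, hsnd']
      rw [this]
      exact (min_eq_right (by omega)).symm
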